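/- The sentence φ_k is logically equivalent to an ∃^{k+1}∀³ sentence, i.e., to a prenex sentence of the form ∃x₁…∃x_{k+1} ∀y₁∀y₂∀y₃ ψ with ψ quantifier-free; in particular, each of ξ₁ and ξ₃ is expressible by a ∀³ sentence, ξ₂ by a ∀¹ sentence, and ξ₅ by a ∀^{k+1} sentence. -/

import Mathlib

set_option linter.dupNamespace false


open FirstOrder Language

namespace LTFinite

/-- Relation symbols of the vocabulary `τ = {≤, S, P, c, d}`: binary `≤` and `S`, unary `P`. -/
inductive TauRel : ℕ → Type
  | le : TauRel 2
  | succ : TauRel 2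
  | pelt : TauRel 1

/-- Function symbols of `τ`: the constants `c` and `d`. -/
inductive TauFun : ℕ → Type
  | c : TauFun 0
  | d : TauFun 0

/-- The vocabulary `τ = {≤, S, P, c, d}`. -/
def tau : FirstOrder.Language := ⟨TauFun, TauRel⟩

/-- The atomic formula `t₁ ≤ t₂`. -/
def leF {n : ℕ} (t₁ t₂ : tau.Term (Empty ⊕ Fin n)) : tau.BoundedFormula Empty n :=
  Relations.boundedFormula₂ (TauRel.le : tau.Relations 2) t₁ t₂

/-- The atomic formula `S(t₁, t₂)`. -/
def sF {n : ℕ} (t₁ t₂ : tau.Term (Empty ⊕ Fin n)) : tau.BoundedFormula Empty n :=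
  Relations.boundedFormula₂ (TauRel.succ : tau.Relations 2) t₁ t₂

/-- The atomic formula `P(t)`. -/
def pF {n : ℕ} (t : tau.Term (Empty ⊕ Fin n)) : tau.BoundedFormula Empty n :=
  Relations.boundedFormula₁ (TauRel.pelt : tau.Relations 1) t

/-- The constant term `c`. -/
def cT {n : ℕ} : tau.Term (Empty ⊕ Fin n) := Constants.term TauFun.c

/-- The constant term `d`. -/
def dT {n : ℕ} : tau.Term (Empty ⊕ Fin n) := Constants.term TauFun.d

/-- `ξ₁`: `≤` is a (reflexive) linear order. -/
def xi1 : tau.Sentence :=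
  ∀' ∀' ∀' ((leF &0 &0) ⊓ (((leF &0 &1) ⊓ (leF &1 &2)) ⟹ (leF &0 &2)) ⊓
    (((leF &0 &1) ⊓ (leF &1 &0)) ⟹ Term.bdEqual (&0) (&1)) ⊓ ((leF &0 &1) ⊔ (leF &1 &0)))

/-- `ξ₂`: `c` is minimum and `d` is maximum under `≤`. -/
def xi2 : tau.Sentence :=
  ∀' ((leF cT &0) ⊓ (leF &0 dT))

/-- `ξ₃`: `S(x, y)` implies that `y` is the successor of `x` under `≤`. -/
def xi3 : tau.Sentence :=
  ∀' ∀' ∀' ((sF &0 &1) ⟹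
    ((leF &0 &1) ⊓ ∼(Term.bdEqual (&0) (&1)) ⊓ ((leF &0 &2) ⟹ ((Term.bdEqual (&2) (&0)) ⊔ (leF &1 &2)))))

/-- `ξ₄`: every element other than `d` has an `S`-successor. -/
def xi4 : tau.Sentence :=
  ∀' ((∼(Term.bdEqual (&0) dT)) ⟹ ∃' (sF &0 &1))

/-- `ξ₅ k`: at most `k` elements satisfy `P`. -/
def xi5 (k : ℕ) : tau.Sentence :=
  ((List.ofFn fun i : Fin (k + 1) => pF (Term.var (Sum.inr i))).foldr (· ⊓ ·) ⊤ ⟹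
      (((List.finRange (k + 1) ×ˢ List.finRange (k + 1)).filter (fun ij => ij.1 < ij.2)).map
          fun ij => Term.bdEqual (Term.var (Sum.inr ij.1)) (Term.var (Sum.inr ij.2))).foldr
        (· ⊔ ·) ⊥).alls

/-- The sentence `φ_k := (ξ₁ ∧ ξ₂ ∧ ξ₃) ∧ ¬(ξ₄ ∧ ξ₅)`. -/
def phi (k : ℕ) : tau.Sentence :=
  (xi1 ⊓ xi2 ⊓ xi3) ⊓ ∼(xi4 ⊓ xi5 k)

/-- Universally quantify over the last `n` free (de Bruijn) variables of a bounded formula,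
leaving the first `k` variables free. -/
def allsFrom (k : ℕ) : ∀ {n : ℕ}, tau.BoundedFormula Empty (k + n) → tau.BoundedFormula Empty k
  | 0, ψ => ψ
  | _ + 1, ψ => allsFrom k ψ.all

/-- The `∃^k∀*` sentence `∃x₁…∃x_k ∀y₁…∀y_n ψ` built from a quantifier-free matrix `ψ`. -/
def existsForallSentence (k n : ℕ) (ψ : tau.BoundedFormula Empty (k + n)) : tau.Sentence :=
  (allsFrom k ψ).exs

universe w

/-! ### Auxiliary lemmas -/

section Aux

lemma isQF_leF {n} (t₁ t₂ : tau.Term (Empty ⊕ Fin n)) : (leF t₁ t₂).IsQF :=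
  (BoundedFormula.IsAtomic.rel _ _).isQF
lemma isQF_sF {n} (t₁ t₂ : tau.Term (Empty ⊕ Fin n)) : (sF t₁ t₂).IsQF :=
  (BoundedFormula.IsAtomic.rel _ _).isQF
lemma isQF_pF {n} (t : tau.Term (Empty ⊕ Fin n)) : (pF t).IsQF :=
  (BoundedFormula.IsAtomic.rel _ _).isQF
lemma isQF_eq {n} (t₁ t₂ : tau.Term (Empty ⊕ Fin n)) : (Term.bdEqual t₁ t₂).IsQF :=
  (BoundedFormula.IsAtomic.equal _ _).isQF

lemma isQF_foldr_inf {n} (l : List (tau.BoundedFormula Empty n)) (h : ∀ φ ∈ l, φ.IsQF) :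
    (l.foldr (· ⊓ ·) ⊤).IsQF := by
  induction l with
  | nil => exact BoundedFormula.IsQF.top
  | cons a l ih => exact ((h a (by simp)).inf (ih fun φ hφ => h φ (by simp [hφ])))

lemma isQF_foldr_sup {n} (l : List (tau.BoundedFormula Empty n)) (h : ∀ φ ∈ l, φ.IsQF) :
    (l.foldr (· ⊔ ·) ⊥).IsQF := by
  induction l with
  | nil => exact BoundedFormula.isQF_bot
  | cons a l ih => exact ((h a (by simp)).sup (ih fun φ hφ => h φ (by simp [hφ])))

lemma isQF_xi1body : ((leF &0 &0) ⊓ (((leF &0 &1) ⊓ (leF &1 &2)) ⟹ (leF &0 &2)) ⊓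
    (((leF &0 &1) ⊓ (leF &1 &0)) ⟹ Term.bdEqual (&0) (&1)) ⊓
    ((leF &0 &1) ⊔ (leF &1 &0)) : tau.BoundedFormula Empty 3).IsQF :=
  ((((isQF_leF _ _).inf (((isQF_leF _ _).inf (isQF_leF _ _)).imp (isQF_leF _ _))).inf
    (((isQF_leF _ _).inf (isQF_leF _ _)).imp (isQF_eq _ _))).inf
    ((isQF_leF _ _).sup (isQF_leF _ _)))

lemma isQF_xi3body : ((sF &0 &1) ⟹ ((leF &0 &1) ⊓ ∼(Term.bdEqual (&0) (&1)) ⊓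
    ((leF &0 &2) ⟹ ((Term.bdEqual (&2) (&0)) ⊔ (leF &1 &2)))) :
    tau.BoundedFormula Empty 3).IsQF :=
  (isQF_sF _ _).imp (((isQF_leF _ _).inf (isQF_eq _ _).not).inf
    ((isQF_leF _ _).imp ((isQF_eq _ _).sup (isQF_leF _ _))))

variable (M : Type w) [tau.Structure M]

/-- Interpretation of `≤`. -/
def LE (a b : M) : Prop := Structure.RelMap (L := tau) TauRel.le ![a, b]
/-- Interpretation of `S`. -/
def SS (a b : M) : Prop := Structure.RelMap (L := tau) TauRel.succ ![a, b]
/-- Interpretation of `P`. -/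
def PP (a : M) : Prop := Structure.RelMap (L := tau) TauRel.pelt ![a]
/-- Interpretation of `c`. -/
def cM : M := constantMap (L := tau) TauFun.c
/-- Interpretation of `d`. -/
def dM : M := constantMap (L := tau) TauFun.d

variable {M}

@[simp] lemma realize_le_tau {n} (t₁ t₂ : tau.Term (Empty ⊕ Fin n)) (v : Empty → M)
    (xs : Fin n → M) :
    (Relations.boundedFormula₂ (TauRel.le : tau.Relations 2) t₁ t₂).Realize v xs ↔
      Structure.RelMap (L := tau) TauRel.le
        ![t₁.realize (Sum.elim v xs), t₂.realize (Sum.elim v xs)] :=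
  BoundedFormula.realize_rel₂
@[simp] lemma realize_succ_tau {n} (t₁ t₂ : tau.Term (Empty ⊕ Fin n)) (v : Empty → M)
    (xs : Fin n → M) :
    (Relations.boundedFormula₂ (TauRel.succ : tau.Relations 2) t₁ t₂).Realize v xs ↔
      Structure.RelMap (L := tau) TauRel.succ
        ![t₁.realize (Sum.elim v xs), t₂.realize (Sum.elim v xs)] :=
  BoundedFormula.realize_rel₂
@[simp] lemma realize_pelt_tau {n} (t : tau.Term (Empty ⊕ Fin n)) (v : Empty → M)
    (xs : Fin n → M) :
    (Relations.boundedFormula₁ (TauRel.pelt : tau.Relations 1) t).Realize v xs ↔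
      Structure.RelMap (L := tau) TauRel.pelt ![t.realize (Sum.elim v xs)] :=
  BoundedFormula.realize_rel₁
@[simp] lemma realize_c_tau {α : Type*} (v : α → M) :
    (@Constants.term tau α TauFun.c).realize v = constantMap (L := tau) TauFun.c :=
  Term.realize_constants
@[simp] lemma realize_d_tau {α : Type*} (v : α → M) :
    (@Constants.term tau α TauFun.d).realize v = constantMap (L := tau) TauFun.d :=
  Term.realize_constants

omit [tau.Structure M] in
@[simp] lemma snoc3_zero (f : Fin 0 → M) (a b c : M) :
    (Fin.snoc (Fin.snoc (Fin.snoc f a) b) c : Fin 3 → M) 0 = a := rfl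
omit [tau.Structure M] in
@[simp] lemma snoc3_one (f : Fin 0 → M) (a b c : M) :
    (Fin.snoc (Fin.snoc (Fin.snoc f a) b) c : Fin 3 → M) 1 = b := rfl
omit [tau.Structure M] in
@[simp] lemma snoc3_two (f : Fin 0 → M) (a b c : M) :
    (Fin.snoc (Fin.snoc (Fin.snoc f a) b) c : Fin 3 → M) 2 = c := rfl

omit [tau.Structure M] in
@[simp] lemma snocs_castAdd {m : ℕ} (xs : Fin m → M) (a b c : M) (i : Fin m) :
    (Fin.snoc (Fin.snoc (Fin.snoc xs a) b) c : Fin (m+3) → M) (Fin.castAdd 3 i) = xs i := by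
  have h : (Fin.castAdd 3 i : Fin (m + 3)) = i.castSucc.castSucc.castSucc := by
    ext; simp
  rw [h, Fin.snoc_castSucc, Fin.snoc_castSucc, Fin.snoc_castSucc]

omit [tau.Structure M] in
@[simp] lemma snocs_natAdd_zero {m : ℕ} (xs : Fin m → M) (a b c : M) :
    (Fin.snoc (Fin.snoc (Fin.snoc xs a) b) c : Fin (m+3) → M) (Fin.natAdd m (0 : Fin 3)) = a := by
  have h : (Fin.natAdd m (0 : Fin 3)) = ((Fin.last m).castSucc).castSucc := by
    ext; simp
  rw [h, Fin.snoc_castSucc, Fin.snoc_castSucc, Fin.snoc_last]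

omit [tau.Structure M] in
@[simp] lemma snocs_natAdd_one {m : ℕ} (xs : Fin m → M) (a b c : M) :
    (Fin.snoc (Fin.snoc (Fin.snoc xs a) b) c : Fin (m+3) → M) (Fin.natAdd m (1 : Fin 3)) = b := by
  have h : (Fin.natAdd m (1 : Fin 3)) = (Fin.last (m + 1)).castSucc := by
    ext; simp
  rw [h, Fin.snoc_castSucc, Fin.snoc_last]

omit [tau.Structure M] in
@[simp] lemma snocs_natAdd_two {m : ℕ} (xs : Fin m → M) (a b c : M) :
    (Fin.snoc (Fin.snoc (Fin.snoc xs a) b) c : Fin (m+3) → M) (Fin.natAdd m (2 : Fin 3)) = c := by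
  have h : (Fin.natAdd m (2 : Fin 3)) = Fin.last (m + 2) := by
    ext; simp
  rw [h, Fin.snoc_last]

@[simp] lemma realize_foldr_inf {n} (l : List (tau.BoundedFormula Empty n))
    (v : Empty → M) (xs : Fin n → M) :
    (l.foldr (· ⊓ ·) ⊤).Realize v xs ↔ ∀ φ ∈ l, φ.Realize v xs := by
  induction l with
  | nil => simp
  | cons a l ih => simp [ih]

/-- The first-order content of `ξ₁`. -/
def A1 (a b c : M) : Prop :=
  LE M a a ∧ ((LE M a b ∧ LE M b c) → LE M a c) ∧ ((LE M a b ∧ LE M b a) → a = b) ∧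
    (LE M a b ∨ LE M b a)
/-- The first-order content of `ξ₂`. -/
def B2 (a : M) : Prop := LE M (cM M) a ∧ LE M a (dM M)
/-- The first-order content of `ξ₃`. -/
def C3 (a b c : M) : Prop :=
  SS M a b → (LE M a b ∧ ¬(a = b) ∧ (LE M a c → (c = a ∨ LE M b c)))

lemma sat_xi1 : (M ⊨ xi1) ↔ ∀ a b c : M, A1 a b c := by
  simp only [xi1, leF, Sentence.Realize, Formula.Realize, BoundedFormula.realize_all,
    BoundedFormula.realize_inf, BoundedFormula.realize_imp, BoundedFormula.realize_sup,
    BoundedFormula.realize_rel₂, realize_le_tau, realize_succ_tau, Term.realize_var, Sum.elim_inr,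
    BoundedFormula.realize_bdEqual, LE, A1, Function.comp_apply,
    snoc3_zero, snoc3_one, snoc3_two]
  constructor <;> intro h a b c <;> have := h a b c <;> tauto

lemma sat_xi2 : (M ⊨ xi2) ↔ ∀ a : M, B2 a := by
  simp only [xi2, leF, cT, dT, Sentence.Realize, Formula.Realize, BoundedFormula.realize_all,
    BoundedFormula.realize_inf, BoundedFormula.realize_rel₂, realize_le_tau, realize_succ_tau, Term.realize_var,
    Term.realize_constants, realize_c_tau, realize_d_tau, Sum.elim_inr, LE, B2, cM, dM, Function.comp_apply,
    Fin.snoc_last, Fin.snoc_zero]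


lemma sat_xi3 : (M ⊨ xi3) ↔ ∀ a b c : M, C3 a b c := by
  simp only [xi3, leF, sF, Sentence.Realize, Formula.Realize, BoundedFormula.realize_all,
    BoundedFormula.realize_inf, BoundedFormula.realize_imp, BoundedFormula.realize_sup,
    BoundedFormula.realize_not, BoundedFormula.realize_rel₂, realize_le_tau, realize_succ_tau, Term.realize_var, Sum.elim_inr,
    BoundedFormula.realize_bdEqual, LE, SS, C3, Function.comp_apply,
    snoc3_zero, snoc3_one, snoc3_two]
  constructor <;> intro h a b c <;> have := h a b c <;> tauto

lemma sat_xi4 : (M ⊨ xi4) ↔ ∀ a : M, a ≠ dM M → ∃ b, SS M a b := by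
  simp only [xi4, sF, dT, Sentence.Realize, Formula.Realize, BoundedFormula.realize_all,
    BoundedFormula.realize_imp, BoundedFormula.realize_not, BoundedFormula.realize_ex,
    BoundedFormula.realize_rel₂, realize_le_tau, realize_succ_tau, Term.realize_var, Term.realize_constants, realize_c_tau, realize_d_tau, Sum.elim_inr,
    BoundedFormula.realize_bdEqual, SS, dM, ne_eq, Function.comp_apply,
    Fin.snoc_last, Fin.snoc_zero]
  rfl

lemma sat_xi5 (k : ℕ) : (M ⊨ xi5 k) ↔ ∀ xs : Fin (k + 1) → M,
    (∀ i, PP M (xs i)) → ∃ i j : Fin (k + 1), i < j ∧ xs i = xs j := by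
  simp only [xi5, pF, Sentence.Realize, BoundedFormula.realize_alls,
    BoundedFormula.realize_imp, realize_foldr_inf, BoundedFormula.realize_foldr_sup,
    List.forall_mem_ofFn_iff, List.mem_map, List.mem_filter, List.mem_product,
    List.mem_finRange, exists_exists_and_eq_and,
    BoundedFormula.realize_rel₁, realize_pelt_tau, BoundedFormula.realize_bdEqual, Term.realize_var,
    Sum.elim_inr, PP, decide_eq_true_eq, true_and]
  refine forall_congr' fun xs => imp_congr Iff.rfl ?_
  constructor
  · rintro ⟨⟨i, j⟩, ⟨-, hij⟩, h⟩; exact ⟨i, j, hij, h⟩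
  · rintro ⟨i, j, hij, h⟩; exact ⟨⟨i, j⟩, ⟨by simp, hij⟩, h⟩

/-! ### The `∃^{k+1}∀³` matrix -/

/-- Existential variables. -/
def X (k : ℕ) (i : Fin (k + 1)) : tau.Term (Empty ⊕ Fin ((k + 1) + 3)) :=
  Term.var (Sum.inr (Fin.castAdd 3 i))
/-- Universal variables. -/
def Y (k : ℕ) (j : Fin 3) : tau.Term (Empty ⊕ Fin ((k + 1) + 3)) :=
  Term.var (Sum.inr (Fin.natAdd (k + 1) j))

/-- The quantifier-free matrix of the `∃^{k+1}∀³` form of `φ_k`. -/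
def psi (k : ℕ) : tau.BoundedFormula Empty ((k + 1) + 3) :=
  ((leF (Y k 0) (Y k 0)) ⊓ (((leF (Y k 0) (Y k 1)) ⊓ (leF (Y k 1) (Y k 2))) ⟹ (leF (Y k 0) (Y k 2))) ⊓
    (((leF (Y k 0) (Y k 1)) ⊓ (leF (Y k 1) (Y k 0))) ⟹ Term.bdEqual (Y k 0) (Y k 1)) ⊓
    ((leF (Y k 0) (Y k 1)) ⊔ (leF (Y k 1) (Y k 0)))) ⊓
  ((leF cT (Y k 0)) ⊓ (leF (Y k 0) dT)) ⊓
  ((sF (Y k 0) (Y k 1)) ⟹ ((leF (Y k 0) (Y k 1)) ⊓ ∼(Term.bdEqual (Y k 0) (Y k 1)) ⊓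
    ((leF (Y k 0) (Y k 2)) ⟹ ((Term.bdEqual (Y k 2) (Y k 0)) ⊔ (leF (Y k 1) (Y k 2)))))) ⊓
  ((∼(Term.bdEqual (X k 0) dT) ⊓ ∼(sF (X k 0) (Y k 0))) ⊔
    (((List.ofFn fun i : Fin (k + 1) => pF (X k i)).foldr (· ⊓ ·) ⊤) ⊓
      ∼((((List.finRange (k + 1) ×ˢ List.finRange (k + 1)).filter (fun ij => ij.1 < ij.2)).map
          fun ij => Term.bdEqual (X k ij.1) (X k ij.2)).foldr (· ⊔ ·) ⊥)))

lemma isQF_psi (k : ℕ) : (psi k).IsQF := by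
  refine ((((?_ : BoundedFormula.IsQF _).inf ?_).inf ?_).inf ?_)
  · exact ((((isQF_leF _ _).inf (((isQF_leF _ _).inf (isQF_leF _ _)).imp (isQF_leF _ _))).inf
      (((isQF_leF _ _).inf (isQF_leF _ _)).imp (isQF_eq _ _))).inf
      ((isQF_leF _ _).sup (isQF_leF _ _)))
  · exact (isQF_leF _ _).inf (isQF_leF _ _)
  · exact (isQF_sF _ _).imp (((isQF_leF _ _).inf (isQF_eq _ _).not).inf
      ((isQF_leF _ _).imp ((isQF_eq _ _).sup (isQF_leF _ _))))
  · refine ((isQF_eq _ _).not.inf (isQF_sF _ _).not).sup ((isQF_foldr_inf _ ?_).inf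
      (isQF_foldr_sup _ ?_).not)
    · intro φ hφ
      rw [List.mem_ofFn] at hφ
      obtain ⟨i, rfl⟩ := hφ
      exact isQF_pF _
    · intro φ hφ
      rw [List.mem_map] at hφ
      obtain ⟨ij, _, rfl⟩ := hφ
      exact isQF_eq _ _

lemma sat_psi (k : ℕ) : (M ⊨ existsForallSentence (k + 1) 3 (psi k)) ↔
    ∃ xs : Fin (k + 1) → M, ∀ a b c : M, A1 a b c ∧ B2 a ∧ C3 a b c ∧
      ((xs 0 ≠ dM M ∧ ¬SS M (xs 0) a) ∨
        ((∀ i, PP M (xs i)) ∧ ¬∃ i j : Fin (k + 1), i < j ∧ xs i = xs j)) := by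
  have hrw : existsForallSentence (k + 1) 3 (psi k) = ((psi k).all.all.all).exs := rfl
  rw [hrw]
  simp only [psi, X, Y, leF, sF, pF, cT, dT, Sentence.Realize,
    BoundedFormula.realize_exs, BoundedFormula.realize_all, BoundedFormula.realize_inf,
    BoundedFormula.realize_imp, BoundedFormula.realize_sup, BoundedFormula.realize_not,
    BoundedFormula.realize_rel₁, realize_pelt_tau, BoundedFormula.realize_rel₂, realize_le_tau, realize_succ_tau, BoundedFormula.realize_bdEqual,
    Term.realize_var, Term.realize_constants, realize_c_tau, realize_d_tau, Sum.elim_inr, realize_foldr_inf,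
    BoundedFormula.realize_foldr_sup, List.forall_mem_ofFn_iff, List.mem_map, List.mem_filter,
    List.mem_product, List.mem_finRange, exists_exists_and_eq_and, decide_eq_true_eq, true_and,
    snocs_castAdd, snocs_natAdd_zero, snocs_natAdd_one, snocs_natAdd_two,
    A1, B2, C3, LE, SS, PP, cM, dM, ne_eq]
  refine exists_congr fun xs => ?_
  constructor
  · intro h b c d
    obtain ⟨⟨⟨⟨⟨⟨x1, x2⟩, x3⟩, x4⟩, hB⟩, hC⟩, hD⟩ := h b c d
    refine ⟨⟨x1, x2, x3, x4⟩, hB, fun hs => ⟨(hC hs).1.1, (hC hs).1.2, (hC hs).2⟩, ?_⟩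
    rcases hD with hD | ⟨hP, hE⟩
    · exact Or.inl hD
    · refine Or.inr ⟨hP, ?_⟩
      rintro ⟨i, j, hij, hh⟩
      exact hE ⟨⟨i, j⟩, ⟨by simp, hij⟩, hh⟩
  · intro h b c d
    obtain ⟨⟨x1, x2, x3, x4⟩, hB, hC, hD⟩ := h b c d
    refine ⟨⟨⟨⟨⟨⟨x1, x2⟩, x3⟩, x4⟩, hB⟩,
      fun hs => ⟨⟨(hC hs).1, (hC hs).2.1⟩, (hC hs).2.2⟩⟩, ?_⟩
    rcases hD with hD | ⟨hP, hE⟩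
    · exact Or.inl hD
    · refine Or.inr ⟨hP, ?_⟩
      rintro ⟨⟨i, j⟩, ⟨-, hij⟩, hh⟩
      exact hE ⟨i, j, hij, hh⟩

end Aux

lemma isQF_xi5body (k : ℕ) :
    (((List.ofFn fun i : Fin (k + 1) => pF (Term.var (Sum.inr i))).foldr (· ⊓ ·) ⊤ ⟹
      (((List.finRange (k + 1) ×ˢ List.finRange (k + 1)).filter (fun ij => ij.1 < ij.2)).map
          fun ij => Term.bdEqual (Term.var (Sum.inr ij.1)) (Term.var (Sum.inr ij.2))).foldr
        (· ⊔ ·) ⊥) : tau.BoundedFormula Empty (k + 1)).IsQF := by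
  refine (isQF_foldr_inf _ ?_).imp (isQF_foldr_sup _ ?_)
  · intro φ hφ
    rw [List.mem_ofFn] at hφ
    obtain ⟨i, rfl⟩ := hφ
    exact isQF_pF _
  · intro φ hφ
    rw [List.mem_map] at hφ
    obtain ⟨ij, _, rfl⟩ := hφ
    exact isQF_eq _ _


/-- **`φ_k` is logically equivalent to an `∃^{k+1}∀³` sentence**, i.e., to a prenex sentence
`∃x₁…∃x_{k+1} ∀y₁∀y₂∀y₃ ψ` with `ψ` quantifier-free; in particular, each of `ξ₁` and `ξ₃` is
expressible by a `∀³` sentence, `ξ₂` by a `∀¹` sentence, and `ξ₅` by a `∀^{k+1}` sentence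
(logical equivalence meaning satisfaction by exactly the same nonempty `τ`-structures). -/
theorem phi_equivalent_to_exists_k_succ_forall_three (k : ℕ) :
    (∃ ψ : tau.BoundedFormula Empty ((k + 1) + 3), ψ.IsQF ∧
      ∀ (M : Type w) [tau.Structure M] [Nonempty M],
        (M ⊨ phi k ↔ M ⊨ existsForallSentence (k + 1) 3 ψ)) ∧
    (∃ ψ : tau.BoundedFormula Empty 3, ψ.IsQF ∧
      ∀ (M : Type w) [tau.Structure M] [Nonempty M], (M ⊨ xi1 ↔ M ⊨ ψ.alls)) ∧
    (∃ ψ : tau.BoundedFormula Empty 3, ψ.IsQF ∧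
      ∀ (M : Type w) [tau.Structure M] [Nonempty M], (M ⊨ xi3 ↔ M ⊨ ψ.alls)) ∧
    (∃ ψ : tau.BoundedFormula Empty 1, ψ.IsQF ∧
      ∀ (M : Type w) [tau.Structure M] [Nonempty M], (M ⊨ xi2 ↔ M ⊨ ψ.alls)) ∧
    (∃ ψ : tau.BoundedFormula Empty (k + 1), ψ.IsQF ∧
      ∀ (M : Type w) [tau.Structure M] [Nonempty M], (M ⊨ xi5 k ↔ M ⊨ ψ.alls)) := by
  refine ⟨⟨psi k, isQF_psi k, fun M _ _ => ?_⟩,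
    ⟨_, isQF_xi1body, fun M _ _ => Iff.rfl⟩,
    ⟨_, isQF_xi3body, fun M _ _ => Iff.rfl⟩,
    ⟨_, (isQF_leF _ _).inf (isQF_leF _ _), fun M _ _ => Iff.rfl⟩,
    ⟨_, isQF_xi5body k, fun M _ _ => Iff.rfl⟩⟩
  rw [sat_psi]
  have hphi : (M ⊨ phi k) ↔ ((M ⊨ xi1) ∧ (M ⊨ xi2) ∧ (M ⊨ xi3)) ∧
      ¬((M ⊨ xi4) ∧ (M ⊨ xi5 k)) := by
    unfold phi
    simp only [Sentence.Realize, Formula.realize_inf, Formula.realize_not]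
    tauto
  rw [hphi, sat_xi1, sat_xi2, sat_xi3, sat_xi4, sat_xi5]
  constructor
  · rintro ⟨⟨h1, h2, h3⟩, h45⟩
    rw [not_and_or] at h45
    rcases h45 with h4 | h5
    · rw [not_forall] at h4
      obtain ⟨a0, ha0⟩ := h4
      rw [Classical.not_imp] at ha0
      obtain ⟨hne, hS⟩ := ha0
      rw [not_exists] at hS
      exact ⟨fun _ => a0, fun a b c => ⟨h1 a b c, h2 a, h3 a b c, Or.inl ⟨hne, hS a⟩⟩⟩
    · rw [not_forall] at h5
      obtain ⟨xs, hxs⟩ := h5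
      rw [Classical.not_imp] at hxs
      obtain ⟨hP, hD⟩ := hxs
      exact ⟨xs, fun a b c => ⟨h1 a b c, h2 a, h3 a b c, Or.inr ⟨hP, hD⟩⟩⟩
  · rintro ⟨xs, h⟩
    have h1 : ∀ a b c : M, A1 a b c := fun a b c => (h a b c).1
    have h2 : ∀ a : M, B2 a := fun a => (h a a a).2.1
    have h3 : ∀ a b c : M, C3 a b c := fun a b c => (h a b c).2.2.1
    refine ⟨⟨h1, h2, h3⟩, ?_⟩
    rw [not_and_or]
    by_cases hR : (∀ i, PP M (xs i)) ∧ ¬∃ i j : Fin (k + 1), i < j ∧ xs i = xs j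
    · right
      intro h5
      exact hR.2 (h5 xs hR.1)
    · left
      have hL : ∀ a : M, xs 0 ≠ dM M ∧ ¬SS M (xs 0) a := by
        intro a
        rcases (h a a a).2.2.2 with hl | hr
        · exact hl
        · exact absurd hr hR
      intro h4
      obtain ⟨m⟩ := ‹Nonempty M›
      obtain ⟨b, hb⟩ := h4 (xs 0) (hL m).1
      exact (hL b).2 hb

end LTFinite
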